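/- Characterization of global entanglement witnesses by the symplectic trace: let Z be a real symmetric positive definite 2N×2N matrix with Williamson form S Z Sᵀ = diag(z₁,z₁,…,z_N,z_N), where S ∈ Sp(2N,ℝ) and z_i > 0. Then tr(Z·γ) ≥ 1 holds for every 2N×2N covariance matrix γ if and only if Σ_{i=1}^N z_i ≥ 1/2. -/

import Mathlib

open Matrix Polynomial
open ComplexOrder

noncomputable section

/-- The standard symplectic form matrix: block diagonal with 2×2 blocks [[0,1],[-1,0]]. -/
def symplForm (n : ℕ) : Matrix (Fin n) (Fin n) ℝ :=
  Matrix.of fun i j =>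
    if (i : ℕ) + 1 = (j : ℕ) ∧ (i : ℕ) % 2 = 0 then 1
    else if (j : ℕ) + 1 = (i : ℕ) ∧ (j : ℕ) % 2 = 0 then -1 else 0

/-- Membership in the real symplectic group: `S σ Sᵀ = σ`. -/
def IsSymplectic {n : ℕ} (S : Matrix (Fin n) (Fin n) ℝ) : Prop :=
  S * symplForm n * Sᵀ = symplForm n

/-- The Williamson diagonal matrix `diag(a₁,a₁,…,a_N,a_N)`. -/
def WDiag {N : ℕ} (a : Fin N → ℝ) : Matrix (Fin (2 * N)) (Fin (2 * N)) ℝ :=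
  Matrix.diagonal fun i => a ⟨(i : ℕ) / 2, by have := i.isLt; omega⟩

/-- A covariance matrix: real symmetric with `γ + iσ` positive semidefinite. -/
def IsCovMatrix {n : ℕ} (γ : Matrix (Fin n) (Fin n) ℝ) : Prop :=
  γ.IsSymm ∧
    (γ.map (Complex.ofReal) + Complex.I • (symplForm n).map Complex.ofReal).PosSemidef

/-- The block-diagonal direct sum of two square matrices. -/
def dirSum {m n : ℕ} (A : Matrix (Fin m) (Fin m) ℝ) (B : Matrix (Fin n) (Fin n) ℝ) :
    Matrix (Fin (m + n)) (Fin (m + n)) ℝ :=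
  Matrix.reindex finSumFinEquiv finSumFinEquiv (Matrix.fromBlocks A 0 0 B)

/-- Separability of a covariance matrix with respect to the split `A|B`. -/
def IsSepCov (nA nB : ℕ) (γ : Matrix (Fin (nA + nB)) (Fin (nA + nB)) ℝ) : Prop :=
  ∃ (γA : Matrix (Fin nA) (Fin nA) ℝ) (γB : Matrix (Fin nB) (Fin nB) ℝ),
    IsCovMatrix γA ∧ IsCovMatrix γB ∧ (γ - dirSum γA γB).PosSemidef



lemma symplForm_transpose (n : ℕ) : (symplForm n)ᵀ = -symplForm n := by
  ext i j
  simp only [Matrix.transpose_apply, symplForm, Matrix.of_apply, Matrix.neg_apply]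
  split_ifs <;> (try casesm* _ ∧ _) <;> first | (exfalso; (try simp only [true_and, and_true] at *); omega) | norm_num

lemma symplForm_mul_self (N : ℕ) : symplForm (2*N) * symplForm (2*N) = -1 := by
  ext i j
  rw [Matrix.mul_apply]
  by_cases hi : (i : ℕ) % 2 = 0
  · have h1 : (i : ℕ) + 1 < 2*N := by have := i.isLt; omega
    rw [Finset.sum_eq_single (⟨(i:ℕ)+1, h1⟩ : Fin (2*N))]
    · simp only [symplForm, Matrix.of_apply, Matrix.neg_apply, Matrix.one_apply, Fin.ext_iff]
      split_ifs <;> (try casesm* _ ∧ _) <;> first | (exfalso; (try simp only [true_and, and_true] at *); omega) | norm_num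
    · intro b _ hb
      have hb' : (b:ℕ) ≠ (i:ℕ)+1 := fun h => hb (Fin.val_injective h)
      simp only [symplForm, Matrix.of_apply]
      have h3 : ¬((i:ℕ)+1 = (b:ℕ) ∧ (i:ℕ) % 2 = 0) := by omega
      have h2 : ¬((b:ℕ)+1 = (i:ℕ) ∧ (b:ℕ) % 2 = 0) := by omega
      rw [if_neg h3, if_neg h2, zero_mul]
    · intro h; exact absurd (Finset.mem_univ _) h
  · have h0 : 1 ≤ (i : ℕ) := by omega
    have h1 : (i : ℕ) - 1 < 2*N := by have := i.isLt; omega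
    rw [Finset.sum_eq_single (⟨(i:ℕ)-1, h1⟩ : Fin (2*N))]
    · simp only [symplForm, Matrix.of_apply, Matrix.neg_apply, Matrix.one_apply, Fin.ext_iff]
      split_ifs <;> (try casesm* _ ∧ _) <;> first | (exfalso; (try simp only [true_and, and_true] at *); omega) | norm_num
    · intro b _ hb
      have hb' : (b:ℕ) ≠ (i:ℕ)-1 := fun h => hb (Fin.val_injective h)
      simp only [symplForm, Matrix.of_apply]
      have h3 : ¬((i:ℕ)+1 = (b:ℕ) ∧ (i:ℕ) % 2 = 0) := by omega
      have h2 : ¬((b:ℕ)+1 = (i:ℕ) ∧ (b:ℕ) % 2 = 0) := by omega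
      rw [if_neg h3, if_neg h2, zero_mul]
    · intro h; exact absurd (Finset.mem_univ _) h

lemma symplForm_mul_neg_self (N : ℕ) : symplForm (2*N) * (-symplForm (2*N)) = 1 := by
  rw [Matrix.mul_neg, symplForm_mul_self]; simp

lemma neg_symplForm_mul_self (N : ℕ) : (-symplForm (2*N)) * symplForm (2*N) = 1 := by
  rw [Matrix.neg_mul, symplForm_mul_self]; simp

section Symp
variable {N : ℕ} {S : Matrix (Fin (2*N)) (Fin (2*N)) ℝ}

/-- explicit inverse of a symplectic matrix -/
def sympInv {N : ℕ} (S : Matrix (Fin (2*N)) (Fin (2*N)) ℝ) : Matrix (Fin (2*N)) (Fin (2*N)) ℝ :=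
  symplForm (2*N) * Sᵀ * (-symplForm (2*N))

lemma symp_mul_sympInv (hS : S * symplForm (2*N) * Sᵀ = symplForm (2*N)) :
    S * sympInv S = 1 := by
  have : S * sympInv S = (S * symplForm (2*N) * Sᵀ) * (-symplForm (2*N)) := by
    simp only [sympInv, Matrix.mul_assoc]
  rw [this, hS, symplForm_mul_neg_self]

lemma sympInv_mul_symp (hS : S * symplForm (2*N) * Sᵀ = symplForm (2*N)) :
    sympInv S * S = 1 :=
  mul_eq_one_comm.mp (symp_mul_sympInv hS)

lemma symp_transpose (hS : S * symplForm (2*N) * Sᵀ = symplForm (2*N)) :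
    Sᵀ * symplForm (2*N) * S = symplForm (2*N) := by
  have h1 : sympInv S * S = 1 := sympInv_mul_symp hS
  have h2 : (-symplForm (2*N)) * (sympInv S * S) = -symplForm (2*N) := by rw [h1, Matrix.mul_one]
  have h3 : Sᵀ * (-symplForm (2*N)) * S = -symplForm (2*N) := by
    calc Sᵀ * (-symplForm (2*N)) * S
        = (-symplForm (2*N)) * (symplForm (2*N) * Sᵀ * (-symplForm (2*N)) * S) := by
          rw [show (-symplForm (2*N)) * (symplForm (2*N) * Sᵀ * (-symplForm (2*N)) * S)
              = ((-symplForm (2*N)) * symplForm (2*N)) * (Sᵀ * (-symplForm (2*N)) * S) by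
            simp only [Matrix.mul_assoc], neg_symplForm_mul_self, Matrix.one_mul]
      _ = -symplForm (2*N) := by
          rw [show symplForm (2*N) * Sᵀ * (-symplForm (2*N)) * S = sympInv S * S from rfl, h1,
            Matrix.mul_one]
  have := congrArg Neg.neg h3
  simpa [Matrix.mul_neg, Matrix.neg_mul] using this

lemma sympInv_symplectic (hS : S * symplForm (2*N) * Sᵀ = symplForm (2*N)) :
    sympInv S * symplForm (2*N) * (sympInv S)ᵀ = symplForm (2*N) := by
  have h1 : sympInv S * S = 1 := sympInv_mul_symp hS
  calc sympInv S * symplForm (2*N) * (sympInv S)ᵀ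
      = sympInv S * (S * symplForm (2*N) * Sᵀ) * (sympInv S)ᵀ := by rw [hS]
    _ = (sympInv S * S) * symplForm (2*N) * (Sᵀ * (sympInv S)ᵀ) := by
        simp only [Matrix.mul_assoc]
    _ = symplForm (2*N) := by
        rw [h1, ← Matrix.transpose_mul, h1, Matrix.transpose_one,
          Matrix.one_mul, Matrix.mul_one]

lemma sympInv_transpose_symplectic (hS : S * symplForm (2*N) * Sᵀ = symplForm (2*N)) :
    (sympInv S)ᵀ * symplForm (2*N) * (sympInv S) = symplForm (2*N) := by
  simpa using symp_transpose (sympInv_symplectic hS)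

end Symp

lemma cmap_mul {n : ℕ} (A B : Matrix (Fin n) (Fin n) ℝ) :
    (A * B).map Complex.ofReal = A.map Complex.ofReal * B.map Complex.ofReal :=
  Matrix.map_mul (f := Complex.ofRealHom)

lemma cmap_conjTranspose {n : ℕ} (A : Matrix (Fin n) (Fin n) ℝ) :
    (A.map Complex.ofReal)ᴴ = Aᵀ.map Complex.ofReal := by
  ext i j
  simp [Matrix.conjTranspose_apply, Complex.conj_ofReal]

lemma cmap_one {n : ℕ} : ((1 : Matrix (Fin n) (Fin n) ℝ)).map Complex.ofReal = 1 :=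
  Matrix.map_one _ Complex.ofReal_zero Complex.ofReal_one

lemma psd_one_add (N : ℕ) :
    ((1 : Matrix (Fin (2*N)) (Fin (2*N)) ℂ)
      + Complex.I • (symplForm (2*N)).map Complex.ofReal).PosSemidef := by
  set σc := (symplForm (2*N)).map Complex.ofReal with hσc
  set M := (1 : Matrix (Fin (2*N)) (Fin (2*N)) ℂ) + Complex.I • σc with hM
  have hσct : σcᴴ = -σc := by
    rw [hσc, cmap_conjTranspose, symplForm_transpose]
    ext i j; simp
  have hherm : M.IsHermitian := by
    unfold M
    rw [Matrix.IsHermitian, Matrix.conjTranspose_add, Matrix.conjTranspose_smul,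
      Matrix.conjTranspose_one, hσct, Complex.star_def, Complex.conj_I]
    rw [smul_neg, neg_smul, neg_neg]
  have hσsq : σc * σc = -1 := by
    rw [hσc, ← cmap_mul, symplForm_mul_self]
    ext i j; simp [Matrix.map_apply, Matrix.one_apply, apply_ite]
  have hsq : M * M = M + M := by
    unfold M
    have e1 : (Complex.I • σc) * (Complex.I • σc) = (1 : Matrix (Fin (2*N)) (Fin (2*N)) ℂ) := by
      rw [Matrix.smul_mul, Matrix.mul_smul, smul_smul, Complex.I_mul_I, hσsq]
      simp
    rw [Matrix.add_mul, Matrix.mul_add, Matrix.mul_add, e1]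
    simp only [Matrix.one_mul, Matrix.mul_one]
    abel
  rw [Matrix.posSemidef_iff_dotProduct_mulVec]
  constructor
  · exact hherm
  · intro x
    have h1 := (Matrix.posSemidef_conjTranspose_mul_self M).dotProduct_mulVec_nonneg x
    rw [hherm.eq, hsq] at h1
    rw [Matrix.add_mulVec, dotProduct_add] at h1
    have h2 : (0:ℂ) ≤ (2:ℂ)⁻¹ := by
      rw [show ((2:ℂ))⁻¹ = ((2⁻¹:ℝ):ℂ) by norm_num]
      exact_mod_cast Complex.zero_le_real.mpr (by norm_num)
    have h3 := mul_nonneg h2 h1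
    rw [mul_add] at h3
    have : (2:ℂ)⁻¹ * (dotProduct (star x) (M *ᵥ x))
        + (2:ℂ)⁻¹ * (dotProduct (star x) (M *ᵥ x))
        = dotProduct (star x) (M *ᵥ x) := by ring
    rwa [this] at h3

lemma IsCovMatrix.conj {n : ℕ} {γ T : Matrix (Fin n) (Fin n) ℝ} (hγ : IsCovMatrix γ)
    (hT : T * symplForm n * Tᵀ = symplForm n) : IsCovMatrix (T * γ * Tᵀ) := by
  constructor
  · rw [Matrix.IsSymm]
    rw [Matrix.transpose_mul, Matrix.transpose_mul, Matrix.transpose_transpose, hγ.1.eq]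
    rw [Matrix.mul_assoc]
  · have key : (T * γ * Tᵀ).map Complex.ofReal
        + Complex.I • (symplForm n).map Complex.ofReal
        = (T.map Complex.ofReal)
          * (γ.map Complex.ofReal + Complex.I • (symplForm n).map Complex.ofReal)
          * (T.map Complex.ofReal)ᴴ := by
      rw [cmap_conjTranspose, Matrix.mul_add, Matrix.add_mul]
      rw [Matrix.mul_smul, Matrix.smul_mul, ← cmap_mul, ← cmap_mul, ← cmap_mul, ← cmap_mul]
      rw [hT]
    rw [key]
    exact hγ.2.mul_mul_conjTranspose_same _

lemma pair_bound {n : ℕ} {γ : Matrix (Fin n) (Fin n) ℝ} (hγ : IsCovMatrix γ)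
    (i₀ i₁ : Fin n) (h01 : (i₀:ℕ) + 1 = (i₁:ℕ)) (h0e : (i₀:ℕ) % 2 = 0) :
    2 ≤ γ i₀ i₀ + γ i₁ i₁ := by
  have hne : i₀ ≠ i₁ := by
    intro h; rw [h] at h01; omega
  set M := γ.map Complex.ofReal + Complex.I • (symplForm n).map Complex.ofReal with hMdef
  have hMapp : ∀ p q, M p q = (γ p q : ℂ) + Complex.I * (symplForm n p q : ℂ) := by
    intro p q
    simp [hMdef, Matrix.add_apply, Matrix.smul_apply, Matrix.map_apply, smul_eq_mul]
  have hσ01 : symplForm n i₀ i₁ = 1 := by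
    simp only [symplForm, Matrix.of_apply]
    rw [if_pos ⟨h01, h0e⟩]
  have hσ10 : symplForm n i₁ i₀ = -1 := by
    simp only [symplForm, Matrix.of_apply]
    rw [if_neg (by omega), if_pos ⟨h01, h0e⟩]
  have hσ00 : symplForm n i₀ i₀ = 0 := by
    simp only [symplForm, Matrix.of_apply]
    rw [if_neg (by omega), if_neg (by omega)]
  have hσ11 : symplForm n i₁ i₁ = 0 := by
    simp only [symplForm, Matrix.of_apply]
    rw [if_neg (by omega), if_neg (by omega)]
  set a := γ i₀ i₀ with ha
  set b := γ i₁ i₁ with hb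
  set c := γ i₀ i₁ with hc
  have hc10 : γ i₁ i₀ = c := by
    have h := hγ.1
    rw [Matrix.IsSymm] at h
    calc γ i₁ i₀ = γᵀ i₀ i₁ := rfl
      _ = γ i₀ i₁ := by rw [h]
  set m : ℂ := (c:ℂ) + Complex.I with hm
  have hconj : (starRingEnd ℂ) m = (c:ℂ) - Complex.I := by
    apply Complex.ext <;> simp [hm]
  set r := ‖m‖ with hr
  have hr1 : 1 ≤ r := by
    have h := Complex.abs_im_le_norm m
    have : m.im = 1 := by simp [hm]
    rw [this] at h
    simpa using h
  have hr0 : 0 < r := lt_of_lt_of_le one_pos hr1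
  have hmm : m * (starRingEnd ℂ) m = ((r^2 : ℝ) : ℂ) := by
    rw [Complex.mul_conj, Complex.normSq_eq_norm_sq, ← hr]
  set x : Fin n → ℂ :=
    fun j => if j = i₀ then (r:ℂ) else if j = i₁ then -((starRingEnd ℂ) m) else 0 with hx
  have hmv : ∀ p, (M *ᵥ x) p = M p i₀ * (r:ℂ) + M p i₁ * (-((starRingEnd ℂ) m)) := by
    intro p
    rw [Matrix.mulVec, dotProduct]
    have hterm : ∀ q, M p q * x q
        = (if q = i₀ then M p i₀ * (r:ℂ) else 0)
          + (if q = i₁ then M p i₁ * (-((starRingEnd ℂ) m)) else 0) := by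
      intro q
      rcases eq_or_ne q i₀ with h|h
      · subst h; simp [hx, hne]
      · rcases eq_or_ne q i₁ with h2|h2
        · subst h2; simp [hx, h]
        · simp [hx, h, h2]
    rw [Finset.sum_congr rfl (fun q _ => hterm q), Finset.sum_add_distrib,
      Finset.sum_ite_eq' Finset.univ i₀, Finset.sum_ite_eq' Finset.univ i₁]
    simp
  have hq : dotProduct (star x) (M *ᵥ x)
      = (r:ℂ) * ((M *ᵥ x) i₀) + (-m) * ((M *ᵥ x) i₁) := by
    rw [dotProduct]
    have hterm : ∀ p, (star x) p * (M *ᵥ x) p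
        = (if p = i₀ then (r:ℂ) * ((M *ᵥ x) i₀) else 0)
          + (if p = i₁ then (-m) * ((M *ᵥ x) i₁) else 0) := by
      intro p
      rcases eq_or_ne p i₀ with h|h
      · subst h; simp [hx, hne, Pi.star_apply, Complex.conj_ofReal]
      · rcases eq_or_ne p i₁ with h2|h2
        · subst h2; simp [hx, h, Pi.star_apply]
        · simp [hx, h, h2, Pi.star_apply]
    rw [Finset.sum_congr rfl (fun p _ => hterm p), Finset.sum_add_distrib,
      Finset.sum_ite_eq' Finset.univ i₀, Finset.sum_ite_eq' Finset.univ i₁]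
    simp
  have hM00 : M i₀ i₀ = (a:ℂ) := by rw [hMapp, hσ00, ← ha]; simp
  have hM11 : M i₁ i₁ = (b:ℂ) := by rw [hMapp, hσ11, ← hb]; simp
  have hM01 : M i₀ i₁ = m := by rw [hMapp, hσ01, ← hc, hm]; push_cast; ring
  have hM10 : M i₁ i₀ = (starRingEnd ℂ) m := by
    rw [hMapp, hσ10, hc10, hconj]; push_cast; ring
  have hP := hγ.2.dotProduct_mulVec_nonneg x
  rw [← hMdef] at hP
  have hqval : dotProduct (star x) (M *ᵥ x) = (((a + b) * r^2 - 2*r^3 : ℝ) : ℂ) := by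
    rw [hq, hmv i₀, hmv i₁, hM00, hM11, hM01, hM10]
    have : (r:ℂ) * ((a:ℂ) * r + m * -((starRingEnd ℂ) m))
        + (-m) * ((starRingEnd ℂ) m * r + (b:ℂ) * -((starRingEnd ℂ) m))
        = (a:ℂ)*(r:ℂ)^2 + (b:ℂ)*(m * (starRingEnd ℂ) m) - 2*(r:ℂ)*(m * (starRingEnd ℂ) m) := by
      ring
    rw [this, hmm]
    push_cast
    ring
  rw [hqval] at hP
  rw [Complex.zero_le_real] at hP
  nlinarith [hP, hr1, hr0, mul_pos hr0 hr0, mul_nonneg (sub_nonneg.mpr hr1) (sq_nonneg r)]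

lemma sum_range_pair (g : ℕ → ℝ) (N : ℕ) :
    ∑ i ∈ Finset.range (2*N), g i = ∑ k ∈ Finset.range N, (g (2*k) + g (2*k+1)) := by
  induction N with
  | zero => simp
  | succ n ih =>
    rw [show 2*(n+1) = (2*n+1)+1 by ring, Finset.sum_range_succ, Finset.sum_range_succ,
      Finset.sum_range_succ, ih]
    ring

lemma sum_fin_pair {N : ℕ} (f : Fin (2*N) → ℝ) :
    ∑ i, f i = ∑ k : Fin N,
      (f ⟨2*(k:ℕ), by have := k.isLt; omega⟩ + f ⟨2*(k:ℕ)+1, by have := k.isLt; omega⟩) := by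
  set g : ℕ → ℝ := fun m => if h : m < 2*N then f ⟨m, h⟩ else 0 with hg
  have h1 : ∑ i, f i = ∑ i ∈ Finset.range (2*N), g i := by
    rw [← Fin.sum_univ_eq_sum_range]
    apply Finset.sum_congr rfl
    intro i _
    simp [hg, i.isLt]
  rw [h1, sum_range_pair]
  rw [← Fin.sum_univ_eq_sum_range (fun k => g (2*k) + g (2*k+1)) N]
  apply Finset.sum_congr rfl
  intro k _
  have hk0 : 2*(k:ℕ) < 2*N := by have := k.isLt; omega
  have hk1 : 2*(k:ℕ)+1 < 2*N := by have := k.isLt; omega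
  simp [hg, hk0, hk1]

lemma trace_WDiag_mul {N : ℕ} (z : Fin N → ℝ) (A : Matrix (Fin (2*N)) (Fin (2*N)) ℝ) :
    (WDiag z * A).trace = ∑ i : Fin (2*N), z ⟨(i:ℕ)/2, by have := i.isLt; omega⟩ * A i i := by
  simp [Matrix.trace, Matrix.diag, WDiag, Matrix.diagonal_mul]

lemma trace_WDiag {N : ℕ} (z : Fin N → ℝ) : (WDiag z).trace = 2 * ∑ i, z i := by
  rw [show (WDiag z).trace = ∑ i : Fin (2*N), z ⟨(i:ℕ)/2, by have := i.isLt; omega⟩ by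
    simp [Matrix.trace, Matrix.diag, WDiag]]
  rw [sum_fin_pair (fun i => z ⟨(i:ℕ)/2, by have := i.isLt; omega⟩)]
  rw [Finset.mul_sum]
  apply Finset.sum_congr rfl
  intro k _
  have e0 : (⟨2*(k:ℕ)/2, by have := k.isLt; omega⟩ : Fin N) = k := by
    apply Fin.ext; simp
  have e1 : (⟨(2*(k:ℕ)+1)/2, by have := k.isLt; omega⟩ : Fin N) = k := by
    apply Fin.ext; simp; omega
  rw [e0, e1]; ring

/-- Characterization of global entanglement witnesses by the symplectic trace:
`tr(Zγ) ≥ 1` for every covariance matrix `γ` iff the symplectic trace of `Z` is `≥ 1/2`. -/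
theorem global_witness_characterization (N : ℕ) (hN : 1 ≤ N)
    (Z S : Matrix (Fin (2 * N)) (Fin (2 * N)) ℝ) (z : Fin N → ℝ)
    (hZsymm : Z.IsSymm) (hZpos : Z.PosDef)
    (hS : IsSymplectic S) (hz : ∀ i, 0 < z i) (hW : S * Z * Sᵀ = WDiag z) :
    (∀ γ : Matrix (Fin (2 * N)) (Fin (2 * N)) ℝ, IsCovMatrix γ → 1 ≤ (Z * γ).trace) ↔
      (1 / 2 : ℝ) ≤ ∑ i, z i := by
  have hSS : S * symplForm (2*N) * Sᵀ = symplForm (2*N) := hS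
  set R := sympInv S with hRdef
  have hRS : R * S = 1 := sympInv_mul_symp hSS
  have hSR : S * R = 1 := symp_mul_sympInv hSS
  have hts : Rᵀ * Sᵀ = 1 := by rw [← Matrix.transpose_mul, hSR, Matrix.transpose_one]
  have hst : Sᵀ * Rᵀ = 1 := by rw [← Matrix.transpose_mul, hRS, Matrix.transpose_one]
  have hZ : Z = R * WDiag z * Rᵀ := by
    calc Z = (R * S) * Z * (Sᵀ * Rᵀ) := by rw [hRS, hst, Matrix.one_mul, Matrix.mul_one]
      _ = R * (S * Z * Sᵀ) * Rᵀ := by simp only [Matrix.mul_assoc]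
      _ = R * WDiag z * Rᵀ := by rw [hW]
  constructor
  · intro hAll
    have hSt : Sᵀ * symplForm (2*N) * Sᵀᵀ = symplForm (2*N) := by
      rw [Matrix.transpose_transpose]; exact symp_transpose hSS
    have hcov1 : IsCovMatrix (1 : Matrix (Fin (2*N)) (Fin (2*N)) ℝ) := by
      constructor
      · rw [Matrix.IsSymm, Matrix.transpose_one]
      · rw [cmap_one]
        exact psd_one_add N
    have hcov : IsCovMatrix (Sᵀ * 1 * Sᵀᵀ) := hcov1.conj hSt
    rw [Matrix.mul_one, Matrix.transpose_transpose] at hcov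
    have h1 := hAll _ hcov
    have htr : (Z * (Sᵀ * S)).trace = (WDiag z).trace := by
      rw [hZ]
      have e : R * WDiag z * Rᵀ * (Sᵀ * S) = R * (WDiag z * S) := by
        calc R * WDiag z * Rᵀ * (Sᵀ * S) = R * (WDiag z * ((Rᵀ * Sᵀ) * S)) := by
              simp only [Matrix.mul_assoc]
          _ = R * (WDiag z * S) := by rw [hts, Matrix.one_mul]
      rw [e, Matrix.trace_mul_comm, Matrix.mul_assoc, hSR, Matrix.mul_one]
    rw [htr, trace_WDiag] at h1
    linarith
  · intro hsum γ hγ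
    have hRt : Rᵀ * symplForm (2*N) * Rᵀᵀ = symplForm (2*N) := by
      rw [Matrix.transpose_transpose]; exact sympInv_transpose_symplectic hSS
    have hcov' : IsCovMatrix (Rᵀ * γ * R) := by
      have h := hγ.conj hRt
      rwa [Matrix.transpose_transpose] at h
    have htr : (Z * γ).trace = (WDiag z * (Rᵀ * γ * R)).trace := by
      rw [hZ]
      have e : R * WDiag z * Rᵀ * γ = R * (WDiag z * Rᵀ * γ) := by
        simp only [Matrix.mul_assoc]
      rw [e, Matrix.trace_mul_comm]
      simp only [Matrix.mul_assoc]
    rw [htr, trace_WDiag_mul]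
    set γ' := Rᵀ * γ * R with hγ'
    rw [sum_fin_pair (fun i => z ⟨(i:ℕ)/2, by have := i.isLt; omega⟩ * γ' i i)]
    have hstep : ∀ k : Fin N,
        2 * z k ≤ z ⟨2*(k:ℕ)/2, by have := k.isLt; omega⟩
              * γ' ⟨2*(k:ℕ), by have := k.isLt; omega⟩ ⟨2*(k:ℕ), by have := k.isLt; omega⟩
            + z ⟨(2*(k:ℕ)+1)/2, by have := k.isLt; omega⟩
              * γ' ⟨2*(k:ℕ)+1, by have := k.isLt; omega⟩ ⟨2*(k:ℕ)+1, by have := k.isLt; omega⟩ := by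
      intro k
      have e0 : (⟨2*(k:ℕ)/2, by have := k.isLt; omega⟩ : Fin N) = k := by
        apply Fin.ext; simp
      have e1 : (⟨(2*(k:ℕ)+1)/2, by have := k.isLt; omega⟩ : Fin N) = k := by
        apply Fin.ext; simp; omega
      rw [e0, e1, ← mul_add]
      have hpb := pair_bound hcov' ⟨2*(k:ℕ), by have := k.isLt; omega⟩
        ⟨2*(k:ℕ)+1, by have := k.isLt; omega⟩ rfl (by simp)
      have := mul_le_mul_of_nonneg_left hpb (le_of_lt (hz k))
      linarith
    have hsum2 : ∑ k : Fin N, 2 * z k ≤ ∑ k : Fin N, _ := Finset.sum_le_sum (fun k _ => hstep k)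
    calc (1:ℝ) = 2 * (1/2) := by norm_num
      _ ≤ 2 * ∑ i, z i := by linarith
      _ = ∑ k : Fin N, 2 * z k := by rw [Finset.mul_sum]
      _ ≤ _ := hsum2
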